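/- arXiv:q-alg/9505024 — 3 statements merged into one kernel-verified Lean document; each statement's English description precedes it below -/
import Mathlib

section
/- Let A and B be associative unital algebras over a field k, and let f : A → B be a k-linear map with f(1_A) = 1_B. Then f is an algebra homomorphism if and only if the kernel of the map F : A ⊗ B → B defined by F(a ⊗ b) = f(a)·b is a left ideal of the algebra A ⊗ B^op (where B^op is B with the opposite multiplication). -/
open TensorProduct

/-- for algebras `A`, `B` over a field `k` and a `k`-linear map
`f : A → B` with `f 1 = 1`, the map `f` is an algebra homomorphism iff the kernel
of `F : A ⊗ B → B`, `a ⊗ b ↦ f a * b`, is a left ideal of `A ⊗ Bᵐᵒᵖ`. -/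
theorem stmt0 (k : Type*) [Field k] (A B : Type*) [Ring A] [Algebra k A]
    [Ring B] [Algebra k B] (f : A →ₗ[k] B) (hf1 : f 1 = 1) :
    (∀ a b : A, f (a * b) = f a * f b) ↔
      ∃ I : Ideal (A ⊗[k] Bᵐᵒᵖ),
        (I : Set (A ⊗[k] Bᵐᵒᵖ)) =
          {x : A ⊗[k] Bᵐᵒᵖ |
            ((LinearMap.mul' k B).comp
              (TensorProduct.map f (MulOpposite.opLinearEquiv k).symm.toLinearMap)) x = 0} := by
  set F := ((LinearMap.mul' k B).comp
      (TensorProduct.map f (MulOpposite.opLinearEquiv k).symm.toLinearMap)) with hF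
  have hFtmul : ∀ (a : A) (b : Bᵐᵒᵖ), F (a ⊗ₜ[k] b) = f a * b.unop := by
    intro a b; simp [hF]
  constructor
  · intro hmul
    have key : ∀ (a : A) (b : Bᵐᵒᵖ) (x : A ⊗[k] Bᵐᵒᵖ),
        F ((a ⊗ₜ[k] b) * x) = f a * F x * b.unop := by
      intro a b x
      induction x using TensorProduct.induction_on with
      | zero => simp
      | tmul a' b' =>
        simp [Algebra.TensorProduct.tmul_mul_tmul, hFtmul, hmul, mul_assoc]
      | add x y hx hy => simp [mul_add, hx, hy, add_mul]
    refine ⟨{ carrier := Set.ofPred fun x => F x = 0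
              add_mem' := ?_
              zero_mem' := ?_
              smul_mem' := ?_ }, rfl⟩
    · intro x y hx hy
      simp only [Set.mem_setOf_eq] at *
      simp [hx, hy]
    · simp
    · intro c x hx
      simp only [Set.mem_setOf_eq] at hx ⊢
      show F (c * x) = 0
      induction c using TensorProduct.induction_on with
      | zero => simp
      | tmul a b => rw [key, hx]; simp
      | add y z hy hz => simp [add_mul, hy, hz]
  · rintro ⟨I, hI⟩ a b
    have hmem : ∀ x, x ∈ I ↔ F x = 0 := fun x => by
      rw [← SetLike.mem_coe, hI]; rfl
    have h1 : (b ⊗ₜ[k] (1 : Bᵐᵒᵖ) - (1 : A) ⊗ₜ[k] MulOpposite.op (f b)) ∈ I := by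
      rw [hmem]
      simp [hFtmul, hf1]
    have h2 := I.smul_mem (a ⊗ₜ[k] (1 : Bᵐᵒᵖ)) h1
    rw [hmem, smul_eq_mul, mul_sub] at h2
    simp only [Algebra.TensorProduct.tmul_mul_tmul] at h2
    simpa [hFtmul, hf1, sub_eq_zero] using h2
end

section
/- Let A be a finite-dimensional associative unital algebra over a field k, and let H = End_k(A). For a ∈ A let α(a) ∈ H be left multiplication by a and β(a) ∈ H be right multiplication by a. Then the kernel of the map T₂ : H ⊗ H → Hom_k(A ⊗ A, A) given by T₂(h₁ ⊗ h₂)(a ⊗ b) = h₁(a)h₂(b) equals the right ideal of H ⊗ H generated by the set {β(a) ⊗ 1 − 1 ⊗ α(a) : a ∈ A}. -/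
open TensorProduct MulOpposite

set_option maxHeartbeats 1000000
set_option synthInstance.maxHeartbeats 200000

section aux
variable (k A : Type*) [Field k] [Ring A] [Algebra k A] [FiniteDimensional k A]

omit [FiniteDimensional k A] in
lemma phi_mul (x y : (Module.End k A) ⊗[k] (Module.End k A)) :
    TensorProduct.homTensorHomMap (RingHom.id k) A A A A (x * y) =
      (TensorProduct.homTensorHomMap (RingHom.id k) A A A A x).comp
        (TensorProduct.homTensorHomMap (RingHom.id k) A A A A y) := by
  induction x using TensorProduct.induction_on with
  | zero => simp
  | tmul f g =>
    induction y using TensorProduct.induction_on with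
    | zero => simp
    | tmul f' g' =>
      rw [Algebra.TensorProduct.tmul_mul_tmul]
      ext a b
      simp [Module.End.mul_eq_comp]
    | add y₁ y₂ h1 h2 => rw [mul_add, map_add, h1, h2, map_add, LinearMap.comp_add]
  | add x₁ x₂ h1 h2 => rw [add_mul, map_add, h1, h2, map_add, LinearMap.add_comp]

lemma phi_bij : Function.Bijective (TensorProduct.homTensorHomMap (RingHom.id k) A A A A) := by
  have h : ⇑(TensorProduct.homTensorHomMap (RingHom.id k) A A A A) = ⇑(homTensorHomEquiv k A A A A) :=
    funext fun z => (homTensorHomEquiv_apply z).symm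
  rw [h]
  exact (homTensorHomEquiv k A A A A).bijective

end aux

/-- for a finite-dimensional algebra `A` over a field `k` and
`H = End_k A`, the kernel of `T₂ : H ⊗ H → Hom(A ⊗ A, A)`,
`T₂(h₁ ⊗ h₂)(a ⊗ b) = h₁ a * h₂ b`, is the right ideal of `H ⊗ H` generated by
`{β a ⊗ 1 - 1 ⊗ α a}` where `α a` (resp. `β a`) is left (resp. right)
multiplication by `a`.  (A right ideal of `H ⊗ H` is a left ideal of its
multiplicative opposite.) -/
theorem stmt2 (k A : Type*) [Field k] [Ring A] [Algebra k A] [FiniteDimensional k A] :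
    ∀ x : (Module.End k A) ⊗[k] (Module.End k A),
      ((LinearMap.llcomp k (A ⊗[k] A) (A ⊗[k] A) A (LinearMap.mul' k A)).comp
          (TensorProduct.homTensorHomMap (RingHom.id k) A A A A)) x = 0 ↔
        MulOpposite.op x ∈
          Ideal.span (MulOpposite.op ''
            {y : (Module.End k A) ⊗[k] (Module.End k A) |
              ∃ a : A, y = (LinearMap.mulRight k a) ⊗ₜ[k] (1 : Module.End k A)
                  - (1 : Module.End k A) ⊗ₜ[k] (LinearMap.mulLeft k a)}) := by
  intro x
  have hT : ∀ z : (Module.End k A) ⊗[k] (Module.End k A),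
      ((LinearMap.llcomp k (A ⊗[k] A) (A ⊗[k] A) A (LinearMap.mul' k A)).comp
        (TensorProduct.homTensorHomMap (RingHom.id k) A A A A)) z
        = (LinearMap.mul' k A).comp (TensorProduct.homTensorHomMap (RingHom.id k) A A A A z) := fun z => rfl
  have hgen : ∀ a : A, (LinearMap.mul' k A).comp
      (TensorProduct.homTensorHomMap (RingHom.id k) A A A A
        ((LinearMap.mulRight k a) ⊗ₜ[k] (1 : Module.End k A)
          - (1 : Module.End k A) ⊗ₜ[k] (LinearMap.mulLeft k a))) = 0 := by
    intro a
    ext b c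
    simp [TensorProduct.homTensorHomMap_apply, mul_assoc]
  constructor
  · -- hard direction
    intro hx
    rw [hT] at hx
    set s : A → (Module.End k A) ⊗[k] (Module.End k A) := fun a =>
      (LinearMap.mulRight k a) ⊗ₜ[k] (1 : Module.End k A)
        - (1 : Module.End k A) ⊗ₜ[k] (LinearMap.mulLeft k a) with hs
    set W : Submodule k (A ⊗[k] A) := Submodule.span k
      {e : A ⊗[k] A | ∃ (a : A) (u : A ⊗[k] A),
        e = TensorProduct.homTensorHomMap (RingHom.id k) A A A A (s a) u} with hW
    -- Step A: ker mul' ≤ W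
    have stepA : ∀ e : A ⊗[k] A, LinearMap.mul' k A e = 0 → e ∈ W := by
      intro e he
      have key : ∀ e : A ⊗[k] A, e - (LinearMap.mul' k A e) ⊗ₜ[k] (1 : A) ∈ W := by
        intro e
        induction e using TensorProduct.induction_on with
        | zero => simp
        | tmul a b =>
          have h1 : TensorProduct.homTensorHomMap (RingHom.id k) A A A A (s b) (a ⊗ₜ[k] (1 : A))
              = (a * b) ⊗ₜ[k] (1 : A) - a ⊗ₜ[k] b := by
            simp [s, TensorProduct.homTensorHomMap_apply]
          have h2 : TensorProduct.homTensorHomMap (RingHom.id k) A A A A (s b) (a ⊗ₜ[k] (1 : A)) ∈ W :=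
            Submodule.subset_span ⟨b, a ⊗ₜ[k] (1 : A), rfl⟩
          have h3 := W.neg_mem h2
          rw [h1] at h3
          simpa using h3
        | add e₁ e₂ h1 h2 =>
          have h3 := W.add_mem h1 h2
          rw [map_add, add_tmul]
          convert h3 using 1
          abel
      have h4 := key e
      rw [he, zero_tmul, sub_zero] at h4
      exact h4
    set ee : ((Module.End k A) ⊗[k] (Module.End k A)) ≃ₗ[k] Module.End k (A ⊗[k] A) :=
      LinearEquiv.ofBijective (TensorProduct.homTensorHomMap (RingHom.id k) A A A A) (phi_bij k A) with hee
    have hee_apply : ∀ z, ee z = TensorProduct.homTensorHomMap (RingHom.id k) A A A A z := fun z => rfl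
    have claim : ∀ (φ : (A ⊗[k] A) →ₗ[k] k) (v : A ⊗[k] A), v ∈ W →
        MulOpposite.op (ee.symm (LinearMap.smulRight φ v)) ∈
          Ideal.span (MulOpposite.op ''
            {y : (Module.End k A) ⊗[k] (Module.End k A) |
              ∃ a : A, y = (LinearMap.mulRight k a) ⊗ₜ[k] (1 : Module.End k A)
                  - (1 : Module.End k A) ⊗ₜ[k] (LinearMap.mulLeft k a)}) := by
      intro φ v hv
      induction hv using Submodule.span_induction with
      | mem v hv =>
        obtain ⟨a, u, rfl⟩ := hv
        have hrec : TensorProduct.homTensorHomMap (RingHom.id k) A A A A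
            (ee.symm (LinearMap.smulRight φ u)) = LinearMap.smulRight φ u := by
          rw [← hee_apply]; exact ee.apply_symm_apply _
        have hcomp : LinearMap.smulRight φ (TensorProduct.homTensorHomMap (RingHom.id k) A A A A (s a) u)
            = TensorProduct.homTensorHomMap (RingHom.id k) A A A A
                (s a * ee.symm (LinearMap.smulRight φ u)) := by
          rw [phi_mul, hrec]
          apply LinearMap.ext; intro e
          simp [LinearMap.smulRight_apply, map_smul]
        rw [hcomp, ← hee_apply, ee.symm_apply_apply, op_mul]
        exact Ideal.mul_mem_left _ _ (Ideal.subset_span ⟨s a, ⟨a, rfl⟩, rfl⟩)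
      | zero =>
        have h0 : LinearMap.smulRight φ (0 : A ⊗[k] A) = 0 := by apply LinearMap.ext; intro e; simp
        rw [h0, map_zero, op_zero]
        exact Ideal.zero_mem _
      | add v w _ _ h1 h2 =>
        have ha : LinearMap.smulRight φ (v + w)
            = LinearMap.smulRight φ v + LinearMap.smulRight φ w := by apply LinearMap.ext; intro e; simp [smul_add]
        rw [ha, map_add, op_add]
        exact Ideal.add_mem _ h1 h2
      | smul c v _ h1 =>
        have hsm : LinearMap.smulRight φ (c • v) = c • LinearMap.smulRight φ v := by
          apply LinearMap.ext; intro e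
          simp only [LinearMap.smulRight_apply, LinearMap.smul_apply]
          exact smul_comm _ _ _
        rw [hsm, map_smul]
        have : MulOpposite.op (c • ee.symm (LinearMap.smulRight φ v))
            = algebraMap k (((Module.End k A) ⊗[k] (Module.End k A))ᵐᵒᵖ) c
              * MulOpposite.op (ee.symm (LinearMap.smulRight φ v)) := by
          rw [← Algebra.smul_def]
          rfl
        rw [this]
        exact Ideal.mul_mem_left _ _ h1
    have hrange : ∀ e : A ⊗[k] A, TensorProduct.homTensorHomMap (RingHom.id k) A A A A x e ∈ W := by
      intro e
      apply stepA
      exact LinearMap.congr_fun hx e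
    set f' : (A ⊗[k] A) →ₗ[k] W :=
      (TensorProduct.homTensorHomMap (RingHom.id k) A A A A x).codRestrict W hrange with hf'
    set b := Module.finBasis k W with hb
    have hdecomp : TensorProduct.homTensorHomMap (RingHom.id k) A A A A x
        = ∑ j, LinearMap.smulRight ((b.coord j).comp f') ((b j : W) : A ⊗[k] A) := by
      apply LinearMap.ext; intro e
      rw [LinearMap.sum_apply]
      have h5 : TensorProduct.homTensorHomMap (RingHom.id k) A A A A x e = ((f' e : W) : A ⊗[k] A) := rfl
      rw [h5, ← b.sum_repr (f' e)]
      push_cast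
      simp [Module.Basis.coord_apply]
    have hx2 : x = ∑ j, ee.symm (LinearMap.smulRight ((b.coord j).comp f') ((b j : W) : A ⊗[k] A)) := by
      rw [← map_sum, ← hdecomp, ← hee_apply, ee.symm_apply_apply]
    rw [hx2]
    have hop : MulOpposite.op (∑ j, ee.symm (LinearMap.smulRight ((b.coord j).comp f') ((b j : W) : A ⊗[k] A)))
        = ∑ j, MulOpposite.op (ee.symm (LinearMap.smulRight ((b.coord j).comp f') ((b j : W) : A ⊗[k] A))) := by
      simp only [← opAddEquiv_apply, map_sum]
    rw [hop]
    exact Ideal.sum_mem _ fun j _ => claim _ _ (b j).2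
  · -- easy direction
    intro hx
    rw [hT]
    have main : ∀ z ∈ Ideal.span (MulOpposite.op ''
            {y : (Module.End k A) ⊗[k] (Module.End k A) |
              ∃ a : A, y = (LinearMap.mulRight k a) ⊗ₜ[k] (1 : Module.End k A)
                  - (1 : Module.End k A) ⊗ₜ[k] (LinearMap.mulLeft k a)}),
        (LinearMap.mul' k A).comp (TensorProduct.homTensorHomMap (RingHom.id k) A A A A (unop z)) = 0 := by
      intro z hz
      induction hz using Submodule.span_induction with
      | mem z hz =>
        obtain ⟨y, ⟨a, rfl⟩, rfl⟩ := hz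
        simpa using hgen a
      | zero => simp
      | add z w _ _ h1 h2 => rw [unop_add, map_add, LinearMap.comp_add, h1, h2, add_zero]
      | smul c z _ h1 =>
        rw [smul_eq_mul, unop_mul, phi_mul, ← LinearMap.comp_assoc, h1, LinearMap.zero_comp]
    simpa using main (MulOpposite.op x) hx
end

section
/- Let A be a finite-dimensional Hopf algebra with basis {a_t} and dual basis {x_t}. The map T₁ : A* # A → End_k(A*) defined by T₁(x # a)(y) = x·(a ⇀ y) is an algebra isomorphism; its inverse sends φ ∈ End_k(A*) to Σ_{s,t} φ(x_s)x_t # S⁻¹(a_t)a_s. -/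
/-- A finite-dimensional Hopf algebra over a field `k`, presented by structure
constants with respect to a finite basis indexed by `ι`.  The underlying space
of the Hopf algebra `A` is `ι → k` (with basis the delta functions `e i`), and
its dual Hopf algebra `A*` is also modelled on `ι → k` (using the dual basis).

* `mul s t r` is the coefficient of `e r` in `e s * e t`;
* `one` is the coefficient vector of the unit of `A`;
* `comul r s t` is the coefficient of `e s ⊗ e t` in `Δ (e r)`;
* `counit t` is `ε (e t)`;
* `S t r` is the coefficient of `e r` in the antipode `S (e t)`, and `Sinv` is
  the matrix of the (composition) inverse of the antipode.

The axioms express associativity, unitality, coassociativity, counitality,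
that `Δ` and `ε` are algebra maps, the antipode identities, and that `Sinv`
is inverse to `S`. -/
structure FinHopfSC (k : Type*) [Field k] (ι : Type*) [Fintype ι] [DecidableEq ι] where
  mul : ι → ι → ι → k
  one : ι → k
  comul : ι → ι → ι → k
  counit : ι → k
  S : ι → ι → k
  Sinv : ι → ι → k
  assoc : ∀ a b c r, (∑ s, mul a b s * mul s c r) = ∑ s, mul b c s * mul a s r
  one_mul : ∀ b r, (∑ s, one s * mul s b r) = if b = r then 1 else 0
  mul_one : ∀ a r, (∑ s, one s * mul a s r) = if a = r then 1 else 0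
  coassoc : ∀ r a b c, (∑ s, comul r s c * comul s a b) = ∑ s, comul r a s * comul s b c
  counit_comul : ∀ r t, (∑ s, comul r s t * counit s) = if r = t then 1 else 0
  comul_counit : ∀ r t, (∑ s, comul r t s * counit s) = if r = t then 1 else 0
  comul_mul : ∀ a b s t, (∑ r, mul a b r * comul r s t) =
      ∑ a1, ∑ a2, ∑ b1, ∑ b2, comul a a1 a2 * comul b b1 b2 * mul a1 b1 s * mul a2 b2 t
  counit_mul : ∀ a b, (∑ r, mul a b r * counit r) = counit a * counit b
  comul_one : ∀ s t, (∑ r, one r * comul r s t) = one s * one t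
  counit_one : (∑ r, one r * counit r) = 1
  antipode_left : ∀ r t, (∑ a, ∑ b, ∑ s, comul r a b * S a s * mul s b t) = counit r * one t
  antipode_right : ∀ r t, (∑ a, ∑ b, ∑ s, comul r a b * S b s * mul a s t) = counit r * one t
  S_Sinv : ∀ a r, (∑ s, S a s * Sinv s r) = if a = r then 1 else 0
  Sinv_S : ∀ a r, (∑ s, Sinv a s * S s r) = if a = r then 1 else 0

namespace FinHopfSC

variable {k : Type*} [Field k] {ι : Type*} [Fintype ι] [DecidableEq ι]
variable (H : FinHopfSC k ι)

/-- the `i`-th basis vector `a_i` of `A` (equally, the `i`-th dual basis vector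
`x_i` of `A*`). -/
def e (i : ι) : ι → k := fun j => if i = j then 1 else 0

/-- the product of `A`. -/
def mulA (a b : ι → k) : ι → k := fun r => ∑ s, ∑ t, a s * b t * H.mul s t r

/-- the unit of `A`. -/
def oneA : ι → k := H.one

/-- the (convolution) product of the dual Hopf algebra `A*`:
`⟨x y, a⟩ = ⟨x ⊗ y, Δ a⟩`. -/
def mulX (x y : ι → k) : ι → k := fun r => ∑ s, ∑ t, H.comul r s t * x s * y t

/-- the unit of `A*` (the counit of `A`). -/
def oneX : ι → k := H.counit

/-- the antipode of `A`. -/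
def SA (a : ι → k) : ι → k := fun r => ∑ t, a t * H.S t r

/-- the inverse of the antipode of `A`. -/
def SAinv (a : ι → k) : ι → k := fun r => ∑ t, a t * H.Sinv t r

/-- the antipode of `A*` (the transpose of the antipode of `A`). -/
def SX (x : ι → k) : ι → k := fun t => ∑ r, H.S t r * x r

/-- the inverse of the antipode of `A*`. -/
def SXinv (x : ι → k) : ι → k := fun t => ∑ r, H.Sinv t r * x r

/-- the left regular action `a ⇀ x = x₍₁₎ ⟨x₍₂₎, a⟩` of `A` on `A*`, i.e.
`⟨a ⇀ x, b⟩ = ⟨x, b a⟩`. -/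
def hit (a x : ι → k) : ι → k := fun r => ∑ s, ∑ t, a s * H.mul r s t * x t

/-- the left adjoint action `ad_x y = x₍₂₎ y S⁻¹(x₍₁₎)` of `A*` (as the Hopf
algebra `A*` with the opposite coproduct) on `A*`. -/
def adX (x y : ι → k) : ι → k := fun r =>
  ∑ p, ∑ a, ∑ b, H.mul a b p * x p * (H.mulX (e b) (H.mulX y (H.SXinv (e a)))) r

end FinHopfSC

namespace FinHopfSC

variable {k : Type*} [Field k] {ι : Type*} [Fintype ι] [DecidableEq ι]
variable (H : FinHopfSC k ι)

/-- the multiplication of the Heisenberg double `H(A*) = A* # A`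
(the smash product of `A*` with `A` for the left regular action):
`(x # a)(y # b) = x (a₍₁₎ ⇀ y) # a₍₂₎ b`.  An element of the Heisenberg double
is recorded by its coefficient matrix `c`, where `c p q` is the coefficient of
the basis element `x_p # a_q`. -/
def smashMul (c d : ι → ι → k) : ι → ι → k := fun u v =>
  ∑ p, ∑ q, ∑ r, ∑ s, ∑ a, ∑ b, c p q * d r s * H.comul q a b *
    (H.mulX (e p) (H.hit (e a) (e r))) u * (H.mulA (e b) (e s)) v

/-- the identity element `1 # 1` of the Heisenberg double. -/
def smashOne : ι → ι → k := fun u v => H.counit u * H.one v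

/-- the source map `α : A* → A* # A`, `x ↦ x # 1`. -/
def alphaH (x : ι → k) : ι → ι → k := fun u v => x u * H.one v

/-- the target map `β : A* → A* # A`, `x ↦ ∑ t, ad_{x_t} x # a_t`. -/
def betaH (x : ι → k) : ι → ι → k := fun u v => H.adX (e v) x u

end FinHopfSC

namespace FinHopfSC

variable {k : Type*} [Field k] {ι : Type*} [Fintype ι] [DecidableEq ι]
variable (H : FinHopfSC k ι)

/-- left multiplication by `x` in `A*`, as a linear endomorphism of `A*`. -/
def mulXL (x : ι → k) : Module.End k (ι → k) where
  toFun := H.mulX x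
  map_add' y z := by
    funext r
    simp [mulX, Pi.add_apply, mul_add, Finset.sum_add_distrib]
  map_smul' c y := by
    funext r
    simp only [mulX, Pi.smul_apply, smul_eq_mul, RingHom.id_apply]
    rw [Finset.mul_sum]
    refine Finset.sum_congr rfl fun s _ => ?_
    rw [Finset.mul_sum]
    exact Finset.sum_congr rfl fun t _ => by ring

/-- the left regular action `a ⇀ ·` of `a ∈ A` on `A*`, as a linear
endomorphism of `A*`. -/
def hitL (a : ι → k) : Module.End k (ι → k) where
  toFun := H.hit a
  map_add' y z := by
    funext r
    simp [hit, Pi.add_apply, mul_add, Finset.sum_add_distrib]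
  map_smul' c y := by
    funext r
    simp only [hit, Pi.smul_apply, smul_eq_mul, RingHom.id_apply]
    rw [Finset.mul_sum]
    refine Finset.sum_congr rfl fun s _ => ?_
    rw [Finset.mul_sum]
    exact Finset.sum_congr rfl fun t _ => by ring

/-- the canonical representation `T₁` of the Heisenberg double `A* # A` on `A*`:
`T₁(x # a)(y) = x (a ⇀ y)`. -/
def T1 (c : ι → ι → k) : Module.End k (ι → k) :=
  ∑ p, ∑ q, c p q • (H.mulXL (e p) * H.hitL (e q))

end FinHopfSC

namespace FinHopfSC
variable {k : Type*} [Field k] {ι : Type*} [Fintype ι] [DecidableEq ι]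
variable (H : FinHopfSC k ι)

set_option linter.unusedSectionVars false

lemma sum_push1 {M : Type*} [AddCommMonoid M] (f : ι → ι → M) :
    (∑ s, ∑ t, f s t) = ∑ t, ∑ s, f s t := Finset.sum_comm

lemma sum_push2 {M : Type*} [AddCommMonoid M] (f : ι → ι → ι → M) :
    (∑ s, ∑ t, ∑ a, f s t a) = ∑ t, ∑ a, ∑ s, f s t a := by
  rw [Finset.sum_comm]
  exact Finset.sum_congr rfl fun t _ => Finset.sum_comm

lemma sum_push3 {M : Type*} [AddCommMonoid M] (f : ι → ι → ι → ι → M) :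
    (∑ s, ∑ t, ∑ a, ∑ b, f s t a b) = ∑ t, ∑ a, ∑ b, ∑ s, f s t a b := by
  rw [Finset.sum_comm]
  exact Finset.sum_congr rfl fun t _ => sum_push2 _

lemma sum_push4 {M : Type*} [AddCommMonoid M] (f : ι → ι → ι → ι → ι → M) :
    (∑ s, ∑ t, ∑ a, ∑ b, ∑ c, f s t a b c) = ∑ t, ∑ a, ∑ b, ∑ c, ∑ s, f s t a b c := by
  rw [Finset.sum_comm]
  exact Finset.sum_congr rfl fun t _ => sum_push3 _

lemma sum_push5 {M : Type*} [AddCommMonoid M] (f : ι → ι → ι → ι → ι → ι → M) :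
    (∑ s, ∑ t, ∑ a, ∑ b, ∑ c, ∑ d, f s t a b c d) =
      ∑ t, ∑ a, ∑ b, ∑ c, ∑ d, ∑ s, f s t a b c d := by
  rw [Finset.sum_comm]
  exact Finset.sum_congr rfl fun t _ => sum_push4 _

lemma mulX_assoc (x y z : ι → k) : H.mulX (H.mulX x y) z = H.mulX x (H.mulX y z) := by
  funext r
  simp only [mulX]
  calc (∑ s, ∑ t, H.comul r s t * (∑ a, ∑ b, H.comul s a b * x a * y b) * z t)
      = ∑ s, ∑ t, ∑ a, ∑ b, (H.comul r s t * H.comul s a b) * (x a * y b * z t) := by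
        refine Finset.sum_congr rfl fun s _ => Finset.sum_congr rfl fun t _ => ?_
        simp only [Finset.mul_sum, Finset.sum_mul]
        exact Finset.sum_congr rfl fun a _ => Finset.sum_congr rfl fun b _ => by ring
    _ = ∑ t, ∑ a, ∑ b, ∑ s, (H.comul r s t * H.comul s a b) * (x a * y b * z t) :=
        sum_push3 _
    _ = ∑ t, ∑ a, ∑ b, (∑ s, H.comul r s t * H.comul s a b) * (x a * y b * z t) := by
        simp only [Finset.sum_mul]
    _ = ∑ t, ∑ a, ∑ b, (∑ s, H.comul r a s * H.comul s b t) * (x a * y b * z t) := by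
        simp only [H.coassoc]
    _ = ∑ s, ∑ t, H.comul r s t * x s * (∑ a, ∑ b, H.comul t a b * y a * z b) := by
        symm
        calc (∑ s, ∑ t, H.comul r s t * x s * (∑ a, ∑ b, H.comul t a b * y a * z b))
            = ∑ s, ∑ t, ∑ a, ∑ b, H.comul r s t * H.comul t a b * (x s * y a * z b) := by
              refine Finset.sum_congr rfl fun s _ => Finset.sum_congr rfl fun t _ => ?_
              simp only [Finset.mul_sum, Finset.sum_mul]
              exact Finset.sum_congr rfl fun a _ => Finset.sum_congr rfl fun b _ => by ring
          _ = ∑ b, ∑ s, ∑ t, ∑ a, H.comul r s t * H.comul t a b * (x s * y a * z b) := by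
              rw [sum_push3, sum_push3, sum_push3]
          _ = ∑ b, ∑ s, ∑ a, ∑ t, H.comul r s t * H.comul t a b * (x s * y a * z b) := by
              exact Finset.sum_congr rfl fun b _ => Finset.sum_congr rfl fun s _ =>
                Finset.sum_comm
          _ = ∑ t, ∑ a, ∑ b, (∑ s, H.comul r a s * H.comul s b t) * (x a * y b * z t) := by
              refine Finset.sum_congr rfl fun b _ => Finset.sum_congr rfl fun s _ =>
                Finset.sum_congr rfl fun a _ => ?_
              rw [Finset.sum_mul]

end FinHopfSC
namespace FinHopfSC
variable {k : Type*} [Field k] {ι : Type*} [Fintype ι] [DecidableEq ι]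
variable (H : FinHopfSC k ι)

set_option linter.unusedSectionVars false

lemma hit_mulA (a b y : ι → k) : H.hit (H.mulA a b) y = H.hit a (H.hit b y) := by
  funext r
  simp only [hit, mulA]
  calc (∑ s, ∑ t, (∑ u, ∑ v, a u * b v * H.mul u v s) * H.mul r s t * y t)
      = ∑ s, ∑ t, ∑ u, ∑ v, (a u * b v) * (H.mul u v s * H.mul r s t) * y t := by
        refine Finset.sum_congr rfl fun s _ => Finset.sum_congr rfl fun t _ => ?_
        simp only [Finset.sum_mul]
        exact Finset.sum_congr rfl fun u _ => Finset.sum_congr rfl fun v _ => by ring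
    _ = ∑ t, ∑ u, ∑ v, ∑ s, (a u * b v) * (H.mul u v s * H.mul r s t) * y t :=
        sum_push3 _
    _ = ∑ t, ∑ u, ∑ v, (a u * b v) * (∑ s, H.mul u v s * H.mul r s t) * y t := by
        refine Finset.sum_congr rfl fun t _ => Finset.sum_congr rfl fun u _ =>
          Finset.sum_congr rfl fun v _ => ?_
        rw [Finset.mul_sum, Finset.sum_mul]
    _ = ∑ t, ∑ u, ∑ v, (a u * b v) * (∑ s, H.mul r u s * H.mul s v t) * y t := by
        simp only [← H.assoc]
    _ = ∑ s, ∑ t, a s * H.mul r s t * (∑ u, ∑ v, b u * H.mul t u v * y v) := by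
        symm
        calc (∑ s, ∑ t, a s * H.mul r s t * (∑ u, ∑ v, b u * H.mul t u v * y v))
            = ∑ s, ∑ t, ∑ u, ∑ v, a s * H.mul r s t * (b u * H.mul t u v * y v) := by
              refine Finset.sum_congr rfl fun s _ => Finset.sum_congr rfl fun t _ => ?_
              simp only [Finset.mul_sum]
          _ = ∑ v, ∑ s, ∑ t, ∑ u, a s * H.mul r s t * (b u * H.mul t u v * y v) := by
              rw [sum_push3, sum_push3, sum_push3]
          _ = ∑ v, ∑ s, ∑ u, ∑ t, a s * H.mul r s t * (b u * H.mul t u v * y v) :=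
              Finset.sum_congr rfl fun v _ => Finset.sum_congr rfl fun s _ =>
                Finset.sum_comm
          _ = ∑ t, ∑ u, ∑ v, (a u * b v) * (∑ s, H.mul r u s * H.mul s v t) * y t := by
              refine Finset.sum_congr rfl fun v _ => Finset.sum_congr rfl fun s _ =>
                Finset.sum_congr rfl fun u _ => ?_
              rw [Finset.mul_sum, Finset.sum_mul]
              exact Finset.sum_congr rfl fun t _ => by ring

lemma mulX_counit (x : ι → k) : H.mulX x H.counit = x := by
  funext r
  simp only [mulX]
  calc (∑ s, ∑ t, H.comul r s t * x s * H.counit t)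
      = ∑ s, (∑ t, H.comul r s t * H.counit t) * x s := by
        refine Finset.sum_congr rfl fun s _ => ?_
        rw [Finset.sum_mul]
        exact Finset.sum_congr rfl fun t _ => by ring
    _ = x r := by simp [H.comul_counit, ite_mul, Finset.sum_ite_eq]

lemma counit_mulX (y : ι → k) : H.mulX H.counit y = y := by
  funext r
  simp only [mulX]
  calc (∑ s, ∑ t, H.comul r s t * H.counit s * y t)
      = ∑ t, (∑ s, H.comul r s t * H.counit s) * y t := by
        rw [sum_push1]
        refine Finset.sum_congr rfl fun t _ => ?_
        rw [Finset.sum_mul]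
    _ = y r := by simp [H.counit_comul, ite_mul, Finset.sum_ite_eq]

lemma hit_one (y : ι → k) : H.hit H.one y = y := by
  funext r
  simp only [hit]
  calc (∑ s, ∑ t, H.one s * H.mul r s t * y t)
      = ∑ t, (∑ s, H.one s * H.mul r s t) * y t := by
        rw [sum_push1]
        refine Finset.sum_congr rfl fun t _ => ?_
        rw [Finset.sum_mul]
    _ = y r := by simp [H.mul_one, ite_mul, Finset.sum_ite_eq]

lemma one_hit (s : ι) (y : ι → k) : (∑ r, H.one r * H.hit (e s) y r) = y s := by
  simp only [hit, e]
  calc (∑ r, H.one r * ∑ s', ∑ t, (if s = s' then (1:k) else 0) * H.mul r s' t * y t)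
      = ∑ r, ∑ t, H.one r * (H.mul r s t * y t) := by
        refine Finset.sum_congr rfl fun r _ => ?_
        rw [Finset.mul_sum]
        simp [ite_mul, Finset.sum_ite_eq, Finset.mul_sum, mul_assoc]
    _ = ∑ t, (∑ r, H.one r * H.mul r s t) * y t := by
        rw [sum_push1]
        refine Finset.sum_congr rfl fun t _ => ?_
        rw [Finset.sum_mul]
        exact Finset.sum_congr rfl fun r _ => by ring
    _ = y s := by simp [H.one_mul, ite_mul, Finset.sum_ite_eq]

end FinHopfSC
namespace FinHopfSC
variable {k : Type*} [Field k] {ι : Type*} [Fintype ι] [DecidableEq ι]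
variable (H : FinHopfSC k ι)

set_option linter.unusedSectionVars false

lemma hit_mulX (q : ι) (x y : ι → k) (r : ι) :
    H.hit (e q) (H.mulX x y) r
      = ∑ a, ∑ b, H.comul q a b * H.mulX (H.hit (e a) x) (H.hit (e b) y) r := by
  have hx : ∀ a s, H.hit (e a) x s = ∑ u, H.mul s a u * x u := by
    intro a s
    simp only [hit, e, ite_mul, one_mul, zero_mul, Finset.sum_ite_eq]
    simp
  have hy : ∀ b t, H.hit (e b) y t = ∑ v, H.mul t b v * y v := by
    intro b t
    simp only [hit, e, ite_mul, one_mul, zero_mul, Finset.sum_ite_eq]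
    simp
  calc H.hit (e q) (H.mulX x y) r
      = ∑ t, H.mul r q t * (∑ u, ∑ v, H.comul t u v * x u * y v) := by
        simp only [hit, e, mulX, ite_mul, one_mul, zero_mul, Finset.sum_ite_eq]
        simp
    _ = ∑ t, ∑ u, ∑ v, (H.mul r q t * H.comul t u v) * (x u * y v) := by
        refine Finset.sum_congr rfl fun t _ => ?_
        rw [Finset.mul_sum]
        refine Finset.sum_congr rfl fun u _ => ?_
        rw [Finset.mul_sum]
        exact Finset.sum_congr rfl fun v _ => by ring
    _ = ∑ u, ∑ v, (∑ t, H.mul r q t * H.comul t u v) * (x u * y v) := by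
        rw [sum_push2]
        refine Finset.sum_congr rfl fun u _ => Finset.sum_congr rfl fun v _ => ?_
        rw [Finset.sum_mul]
    _ = ∑ u, ∑ v, (∑ a1, ∑ a2, ∑ b1, ∑ b2,
          H.comul r a1 a2 * H.comul q b1 b2 * H.mul a1 b1 u * H.mul a2 b2 v) * (x u * y v) := by
        simp only [H.comul_mul]
    _ = ∑ u, ∑ v, ∑ a1, ∑ a2, ∑ b1, ∑ b2,
          H.comul r a1 a2 * H.comul q b1 b2 * H.mul a1 b1 u * H.mul a2 b2 v * (x u * y v) := by
        simp only [Finset.sum_mul]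
    _ = ∑ a, ∑ b, H.comul q a b * H.mulX (H.hit (e a) x) (H.hit (e b) y) r := by
        symm
        calc (∑ a, ∑ b, H.comul q a b * H.mulX (H.hit (e a) x) (H.hit (e b) y) r)
            = ∑ a, ∑ b, ∑ s, ∑ t, ∑ u, ∑ v,
                H.comul r s t * H.comul q a b * H.mul s a u * H.mul t b v * (x u * y v) := by
              refine Finset.sum_congr rfl fun a _ => Finset.sum_congr rfl fun b _ => ?_
              simp only [mulX, hx, hy]
              rw [Finset.mul_sum]
              refine Finset.sum_congr rfl fun s _ => ?_
              rw [Finset.mul_sum]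
              refine Finset.sum_congr rfl fun t _ => ?_
              calc H.comul q a b * (H.comul r s t * (∑ u, H.mul s a u * x u)
                      * (∑ v, H.mul t b v * y v))
                  = ((∑ u, H.mul s a u * x u) * (∑ v, H.mul t b v * y v))
                      * (H.comul r s t * H.comul q a b) := by ring
                _ = (∑ u, ∑ v, (H.mul s a u * x u) * (H.mul t b v * y v))
                      * (H.comul r s t * H.comul q a b) := by rw [Finset.sum_mul_sum]
                _ = ∑ u, ∑ v, H.comul r s t * H.comul q a b * H.mul s a u * H.mul t b v
                      * (x u * y v) := by
                    rw [Finset.sum_mul]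
                    refine Finset.sum_congr rfl fun u _ => ?_
                    rw [Finset.sum_mul]
                    exact Finset.sum_congr rfl fun v _ => by ring
          _ = ∑ u, ∑ v, ∑ a, ∑ b, ∑ s, ∑ t,
                H.comul r s t * H.comul q a b * H.mul s a u * H.mul t b v * (x u * y v) := by
              rw [sum_push5, sum_push5, sum_push5, sum_push5]
          _ = ∑ u, ∑ v, ∑ s, ∑ t, ∑ a, ∑ b,
                H.comul r s t * H.comul q a b * H.mul s a u * H.mul t b v * (x u * y v) := by
              refine Finset.sum_congr rfl fun u _ => Finset.sum_congr rfl fun v _ => ?_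
              rw [sum_push3, sum_push3]
          _ = ∑ u, ∑ v, ∑ a1, ∑ a2, ∑ b1, ∑ b2,
                H.comul r a1 a2 * H.comul q b1 b2 * H.mul a1 b1 u * H.mul a2 b2 v
                  * (x u * y v) := by
              refine Finset.sum_congr rfl fun u _ => Finset.sum_congr rfl fun v _ =>
                Finset.sum_congr rfl fun s _ => Finset.sum_congr rfl fun t _ => ?_
              rw [sum_push1]

end FinHopfSC
namespace FinHopfSC
variable {k : Type*} [Field k] {ι : Type*} [Fintype ι] [DecidableEq ι]
variable (H : FinHopfSC k ι)

set_option linter.unusedSectionVars false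

lemma sum_push6 {M : Type*} [AddCommMonoid M] (f : ι → ι → ι → ι → ι → ι → ι → M) :
    (∑ s, ∑ t, ∑ a, ∑ b, ∑ c, ∑ d, ∑ g, f s t a b c d g) =
      ∑ t, ∑ a, ∑ b, ∑ c, ∑ d, ∑ g, ∑ s, f s t a b c d g := by
  rw [Finset.sum_comm]
  exact Finset.sum_congr rfl fun t _ => sum_push5 _

lemma sum_push7 {M : Type*} [AddCommMonoid M] (f : ι → ι → ι → ι → ι → ι → ι → ι → M) :
    (∑ s, ∑ t, ∑ a, ∑ b, ∑ c, ∑ d, ∑ g, ∑ h, f s t a b c d g h) =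
      ∑ t, ∑ a, ∑ b, ∑ c, ∑ d, ∑ g, ∑ h, ∑ s, f s t a b c d g h := by
  rw [Finset.sum_comm]
  exact Finset.sum_congr rfl fun t _ => sum_push6 _

lemma mulXL_apply (x y : ι → k) : H.mulXL x y = H.mulX x y := rfl
lemma hitL_apply (a y : ι → k) : H.hitL a y = H.hit a y := rfl

lemma mulXL_mul (x y : ι → k) : H.mulXL (H.mulX x y) = H.mulXL x * H.mulXL y :=
  LinearMap.ext fun z => H.mulX_assoc x y z

lemma hitL_mul (a b : ι → k) : H.hitL (H.mulA a b) = H.hitL a * H.hitL b :=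
  LinearMap.ext fun z => H.hit_mulA a b z

lemma straight (q p : ι) : H.hitL (e q) * H.mulXL (e p) =
    ∑ a, ∑ b, H.comul q a b • (H.mulXL (H.hit (e a) (e p)) * H.hitL (e b)) := by
  refine LinearMap.ext fun z => funext fun r => ?_
  calc (H.hitL (e q) * H.mulXL (e p)) z r
      = H.hit (e q) (H.mulX (e p) z) r := rfl
    _ = ∑ a, ∑ b, H.comul q a b * H.mulX (H.hit (e a) (e p)) (H.hit (e b) z) r :=
        H.hit_mulX q (e p) z r
    _ = (∑ a, ∑ b, H.comul q a b • (H.mulXL (H.hit (e a) (e p)) * H.hitL (e b))) z r := by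
        simp only [LinearMap.sum_apply, Finset.sum_apply, LinearMap.smul_apply, Pi.smul_apply,
          Module.End.mul_apply, mulXL_apply, hitL_apply, smul_eq_mul]

lemma mulXL_expand (x : ι → k) : H.mulXL x = ∑ p, x p • H.mulXL (e p) := by
  refine LinearMap.ext fun z => funext fun r => ?_
  have he : ∀ p, H.mulX (e p) z r = ∑ t, H.comul r p t * z t := by
    intro p
    simp only [mulX, e, ite_mul, one_mul, zero_mul, Finset.sum_ite_eq]
    simp
  calc H.mulXL x z r = ∑ s, ∑ t, H.comul r s t * x s * z t := rfl
    _ = ∑ p, x p * ∑ t, H.comul r p t * z t := by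
        refine Finset.sum_congr rfl fun p _ => ?_
        rw [Finset.mul_sum]
        exact Finset.sum_congr rfl fun t _ => by ring
    _ = (∑ p, x p • H.mulXL (e p)) z r := by
        simp only [LinearMap.sum_apply, Finset.sum_apply, LinearMap.smul_apply, Pi.smul_apply,
          smul_eq_mul, mulXL_apply, he]

lemma hitL_expand (a : ι → k) : H.hitL a = ∑ q, a q • H.hitL (e q) := by
  refine LinearMap.ext fun z => funext fun r => ?_
  have he : ∀ q, H.hit (e q) z r = ∑ t, H.mul r q t * z t := by
    intro q
    simp only [hit, e, ite_mul, one_mul, zero_mul, Finset.sum_ite_eq]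
    try simp
  calc H.hitL a z r = ∑ s, ∑ t, a s * H.mul r s t * z t := rfl
    _ = ∑ q, a q * ∑ t, H.mul r q t * z t := by
        refine Finset.sum_congr rfl fun q _ => ?_
        rw [Finset.mul_sum]
        exact Finset.sum_congr rfl fun t _ => by ring
    _ = (∑ q, a q • H.hitL (e q)) z r := by
        simp only [LinearMap.sum_apply, Finset.sum_apply, LinearMap.smul_apply, Pi.smul_apply,
          smul_eq_mul, hitL_apply, he]

lemma mulXL_counit : H.mulXL H.counit = 1 :=
  LinearMap.ext fun z => H.counit_mulX z

lemma hitL_one : H.hitL H.one = 1 :=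
  LinearMap.ext fun z => H.hit_one z

lemma smul_mul_smul' (r s : k) (A B : Module.End k (ι → k)) :
    (r • A) * (s • B) = (r * s) • (A * B) := by
  rw [smul_mul_assoc, mul_smul_comm, smul_smul]

lemma T1_one : H.T1 H.smashOne = 1 := by
  have : H.T1 H.smashOne
      = (∑ p, H.counit p • H.mulXL (e p)) * (∑ q, H.one q • H.hitL (e q)) := by
    rw [Finset.sum_mul_sum]
    simp only [smul_mul_smul']
    rfl
  rw [this, ← H.mulXL_expand, ← H.hitL_expand, H.mulXL_counit, H.hitL_one]
  exact _root_.one_mul 1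

lemma T1_add (c d : ι → ι → k) : H.T1 (c + d) = H.T1 c + H.T1 d := by
  simp only [T1, Pi.add_apply, add_smul, Finset.sum_add_distrib]

lemma T1_smul (r : k) (c : ι → ι → k) : H.T1 (r • c) = r • H.T1 c := by
  simp only [T1, Pi.smul_apply, smul_eq_mul, mul_smul, Finset.smul_sum]

lemma cross (p q r s : ι) :
    (H.mulXL (e p) * H.hitL (e q)) * (H.mulXL (e r) * H.hitL (e s)) =
      ∑ a, ∑ b, H.comul q a b •
        (H.mulXL (H.mulX (e p) (H.hit (e a) (e r))) * H.hitL (H.mulA (e b) (e s))) := by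
  calc (H.mulXL (e p) * H.hitL (e q)) * (H.mulXL (e r) * H.hitL (e s))
      = H.mulXL (e p) * ((H.hitL (e q) * H.mulXL (e r)) * H.hitL (e s)) := by
        simp only [mul_assoc]
    _ = H.mulXL (e p) * ((∑ a, ∑ b, H.comul q a b •
          (H.mulXL (H.hit (e a) (e r)) * H.hitL (e b))) * H.hitL (e s)) := by
        rw [straight]
    _ = ∑ a, ∑ b, H.comul q a b •
          (H.mulXL (H.mulX (e p) (H.hit (e a) (e r))) * H.hitL (H.mulA (e b) (e s))) := by
        rw [Finset.sum_mul, Finset.mul_sum]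
        refine Finset.sum_congr rfl fun a _ => ?_
        rw [Finset.sum_mul, Finset.mul_sum]
        refine Finset.sum_congr rfl fun b _ => ?_
        rw [smul_mul_assoc, mul_smul_comm, mulXL_mul, hitL_mul]
        try congr 1
        try simp only [mul_assoc]

lemma cross2 (p r s a b : ι) :
    H.mulXL (H.mulX (e p) (H.hit (e a) (e r))) * H.hitL (H.mulA (e b) (e s)) =
      ∑ u, ∑ v, (H.mulX (e p) (H.hit (e a) (e r)) u * H.mulA (e b) (e s) v) •
        (H.mulXL (e u) * H.hitL (e v)) := by
  rw [H.mulXL_expand (H.mulX (e p) (H.hit (e a) (e r))), H.hitL_expand (H.mulA (e b) (e s)),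
    Finset.sum_mul_sum]
  simp only [smul_mul_smul']

lemma T1_mul (c d : ι → ι → k) : H.T1 (H.smashMul c d) = H.T1 c * H.T1 d := by
  symm
  calc H.T1 c * H.T1 d
      = ∑ r, ∑ s, ∑ p, ∑ q, (c p q * d r s) •
          ((H.mulXL (e p) * H.hitL (e q)) * (H.mulXL (e r) * H.hitL (e s))) := by
        simp only [T1, Finset.sum_mul, Finset.mul_sum, smul_mul_smul']
    _ = ∑ r, ∑ s, ∑ p, ∑ q, ∑ a, ∑ b, ∑ u, ∑ v,
          (c p q * d r s * H.comul q a b *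
            H.mulX (e p) (H.hit (e a) (e r)) u * H.mulA (e b) (e s) v) •
          (H.mulXL (e u) * H.hitL (e v)) := by
        refine Finset.sum_congr rfl fun r _ => Finset.sum_congr rfl fun s _ =>
          Finset.sum_congr rfl fun p _ => Finset.sum_congr rfl fun q _ => ?_
        rw [H.cross p q r s]
        simp only [H.cross2, Finset.smul_sum, smul_smul]
        refine Finset.sum_congr rfl fun a _ => Finset.sum_congr rfl fun b _ =>
          Finset.sum_congr rfl fun u _ => Finset.sum_congr rfl fun v _ => ?_
        congr 1
        ring
    _ = H.T1 (H.smashMul c d) := by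
        simp only [T1, smashMul, Finset.sum_smul]
        conv_rhs => rw [sum_push7, sum_push7, sum_push3, sum_push3]

end FinHopfSC
namespace FinHopfSC
variable {k : Type*} [Field k] {ι : Type*} [Fintype ι] [DecidableEq ι]
variable (H : FinHopfSC k ι)

set_option linter.unusedSectionVars false

lemma sum_push8 {M : Type*} [AddCommMonoid M] (f : ι → ι → ι → ι → ι → ι → ι → ι → ι → M) :
    (∑ s, ∑ t, ∑ a, ∑ b, ∑ c, ∑ d, ∑ g, ∑ h, ∑ i, f s t a b c d g h i) =
      ∑ t, ∑ a, ∑ b, ∑ c, ∑ d, ∑ g, ∑ h, ∑ i, ∑ s, f s t a b c d g h i := by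
  rw [Finset.sum_comm]
  exact Finset.sum_congr rfl fun t _ => sum_push7 _

lemma sum_push9 {M : Type*} [AddCommMonoid M] (f : ι → ι → ι → ι → ι → ι → ι → ι → ι → ι → M) :
    (∑ s, ∑ t, ∑ a, ∑ b, ∑ c, ∑ d, ∑ g, ∑ h, ∑ i, ∑ j, f s t a b c d g h i j) =
      ∑ t, ∑ a, ∑ b, ∑ c, ∑ d, ∑ g, ∑ h, ∑ i, ∑ j, ∑ s, f s t a b c d g h i j := by
  rw [Finset.sum_comm]
  exact Finset.sum_congr rfl fun t _ => sum_push8 _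

lemma sum_push10 {M : Type*} [AddCommMonoid M]
    (f : ι → ι → ι → ι → ι → ι → ι → ι → ι → ι → ι → M) :
    (∑ s, ∑ t, ∑ a, ∑ b, ∑ c, ∑ d, ∑ g, ∑ h, ∑ i, ∑ j, ∑ l, f s t a b c d g h i j l) =
      ∑ t, ∑ a, ∑ b, ∑ c, ∑ d, ∑ g, ∑ h, ∑ i, ∑ j, ∑ l, ∑ s, f s t a b c d g h i j l := by
  rw [Finset.sum_comm]
  exact Finset.sum_congr rfl fun t _ => sum_push9 _

lemma sum_push11 {M : Type*} [AddCommMonoid M]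
    (f : ι → ι → ι → ι → ι → ι → ι → ι → ι → ι → ι → ι → M) :
    (∑ s, ∑ t, ∑ a, ∑ b, ∑ c, ∑ d, ∑ g, ∑ h, ∑ i, ∑ j, ∑ l, ∑ m, f s t a b c d g h i j l m) =
      ∑ t, ∑ a, ∑ b, ∑ c, ∑ d, ∑ g, ∑ h, ∑ i, ∑ j, ∑ l, ∑ m, ∑ s,
        f s t a b c d g h i j l m := by
  rw [Finset.sum_comm]
  exact Finset.sum_congr rfl fun t _ => sum_push10 _

/-- convolution product on `Hom(A ⊗ A, A)` -/
def conv2 (f g : ι → ι → ι → k) : ι → ι → ι → k := fun a b r =>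
  ∑ a1, ∑ a2, ∑ b1, ∑ b2, ∑ u, ∑ v,
    H.comul a a1 a2 * H.comul b b1 b2 * f a1 b1 u * g a2 b2 v * H.mul u v r

def comul3 (a i j l : ι) : k := ∑ s, H.comul a i s * H.comul s j l
def mul3 (p q v r : ι) : k := ∑ s, H.mul p q s * H.mul s v r

lemma comul3_eq' (a i j l : ι) :
    (∑ s, H.comul a s l * H.comul s i j) = H.comul3 a i j l := H.coassoc a i j l

lemma comul3_def (a i j l : ι) :
    H.comul3 a i j l = ∑ s, H.comul a i s * H.comul s j l := rfl

lemma mul3_def (p q v r : ι) :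
    H.mul3 p q v r = ∑ s, H.mul p q s * H.mul s v r := rfl

lemma mul3_eq' (u p q r : ι) :
    (∑ s, H.mul p q s * H.mul u s r) = H.mul3 u p q r := (H.assoc u p q r).symm

lemma conv2_conv2_left (f g h : ι → ι → ι → k) (a b r : ι) :
    H.conv2 (H.conv2 f g) h a b r
      = ∑ A2, ∑ B2, ∑ V, ∑ x1, ∑ x2, ∑ y1, ∑ y2, ∑ p, ∑ q,
          H.comul3 a x1 x2 A2 * (H.comul3 b y1 y2 B2 * (H.mul3 p q V r *
            (f x1 y1 p * (g x2 y2 q * h A2 B2 V)))) := by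
  unfold conv2
  calc (∑ A1, ∑ A2, ∑ B1, ∑ B2, ∑ U, ∑ V,
          H.comul a A1 A2 * H.comul b B1 B2 *
            (∑ x1, ∑ x2, ∑ y1, ∑ y2, ∑ p, ∑ q,
              H.comul A1 x1 x2 * H.comul B1 y1 y2 * f x1 y1 p * g x2 y2 q * H.mul p q U) *
            h A2 B2 V * H.mul U V r)
      = ∑ A1, ∑ A2, ∑ B1, ∑ B2, ∑ U, ∑ V, ∑ x1, ∑ x2, ∑ y1, ∑ y2, ∑ p, ∑ q,
          (H.comul a A1 A2 * H.comul A1 x1 x2) * ((H.comul b B1 B2 * H.comul B1 y1 y2) *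
            ((H.mul p q U * H.mul U V r) * (f x1 y1 p * (g x2 y2 q * h A2 B2 V)))) := by
        refine Finset.sum_congr rfl fun A1 _ => Finset.sum_congr rfl fun A2 _ =>
          Finset.sum_congr rfl fun B1 _ => Finset.sum_congr rfl fun B2 _ =>
          Finset.sum_congr rfl fun U _ => Finset.sum_congr rfl fun V _ => ?_
        calc H.comul a A1 A2 * H.comul b B1 B2 *
              (∑ x1, ∑ x2, ∑ y1, ∑ y2, ∑ p, ∑ q,
                H.comul A1 x1 x2 * H.comul B1 y1 y2 * f x1 y1 p * g x2 y2 q * H.mul p q U) *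
              h A2 B2 V * H.mul U V r
            = (∑ x1, ∑ x2, ∑ y1, ∑ y2, ∑ p, ∑ q,
                H.comul A1 x1 x2 * H.comul B1 y1 y2 * f x1 y1 p * g x2 y2 q * H.mul p q U) *
              (H.comul a A1 A2 * (H.comul b B1 B2 * (h A2 B2 V * H.mul U V r))) := by ring
          _ = _ := by
              simp only [Finset.sum_mul]
              refine Finset.sum_congr rfl fun x1 _ => Finset.sum_congr rfl fun x2 _ =>
                Finset.sum_congr rfl fun y1 _ => Finset.sum_congr rfl fun y2 _ =>
                Finset.sum_congr rfl fun p _ => Finset.sum_congr rfl fun q _ => by ring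
    _ = ∑ A2, ∑ B2, ∑ V, ∑ x1, ∑ x2, ∑ y1, ∑ y2, ∑ p, ∑ q, ∑ A1, ∑ B1, ∑ U,
          (H.comul a A1 A2 * H.comul A1 x1 x2) * ((H.comul b B1 B2 * H.comul B1 y1 y2) *
            ((H.mul p q U * H.mul U V r) * (f x1 y1 p * (g x2 y2 q * h A2 B2 V)))) := by
        rw [sum_push11]
        conv_lhs => enter [2, A2]; rw [sum_push10]
        conv_lhs => enter [2, A2, 2, B2]; rw [sum_push9]
    _ = _ := by
        refine Finset.sum_congr rfl fun A2 _ => Finset.sum_congr rfl fun B2 _ =>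
          Finset.sum_congr rfl fun V _ => Finset.sum_congr rfl fun x1 _ =>
          Finset.sum_congr rfl fun x2 _ => Finset.sum_congr rfl fun y1 _ =>
          Finset.sum_congr rfl fun y2 _ => Finset.sum_congr rfl fun p _ =>
          Finset.sum_congr rfl fun q _ => ?_
        simp only [← Finset.mul_sum]
        simp only [← Finset.sum_mul]
        rw [H.comul3_eq', H.comul3_eq', ← H.mul3_def]

lemma conv2_conv2_right (f g h : ι → ι → ι → k) (a b r : ι) :
    H.conv2 f (H.conv2 g h) a b r
      = ∑ A1, ∑ B1, ∑ U, ∑ x1, ∑ x2, ∑ y1, ∑ y2, ∑ p, ∑ q,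
          H.comul3 a A1 x1 x2 * (H.comul3 b B1 y1 y2 * (H.mul3 U p q r *
            (f A1 B1 U * (g x1 y1 p * h x2 y2 q)))) := by
  unfold conv2
  calc (∑ A1, ∑ A2, ∑ B1, ∑ B2, ∑ U, ∑ V,
          H.comul a A1 A2 * H.comul b B1 B2 * f A1 B1 U *
            (∑ x1, ∑ x2, ∑ y1, ∑ y2, ∑ p, ∑ q,
              H.comul A2 x1 x2 * H.comul B2 y1 y2 * g x1 y1 p * h x2 y2 q * H.mul p q V) *
            H.mul U V r)
      = ∑ A1, ∑ A2, ∑ B1, ∑ B2, ∑ U, ∑ V, ∑ x1, ∑ x2, ∑ y1, ∑ y2, ∑ p, ∑ q,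
          (H.comul a A1 A2 * H.comul A2 x1 x2) * ((H.comul b B1 B2 * H.comul B2 y1 y2) *
            ((H.mul p q V * H.mul U V r) * (f A1 B1 U * (g x1 y1 p * h x2 y2 q)))) := by
        refine Finset.sum_congr rfl fun A1 _ => Finset.sum_congr rfl fun A2 _ =>
          Finset.sum_congr rfl fun B1 _ => Finset.sum_congr rfl fun B2 _ =>
          Finset.sum_congr rfl fun U _ => Finset.sum_congr rfl fun V _ => ?_
        calc H.comul a A1 A2 * H.comul b B1 B2 * f A1 B1 U *
              (∑ x1, ∑ x2, ∑ y1, ∑ y2, ∑ p, ∑ q,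
                H.comul A2 x1 x2 * H.comul B2 y1 y2 * g x1 y1 p * h x2 y2 q * H.mul p q V) *
              H.mul U V r
            = (∑ x1, ∑ x2, ∑ y1, ∑ y2, ∑ p, ∑ q,
                H.comul A2 x1 x2 * H.comul B2 y1 y2 * g x1 y1 p * h x2 y2 q * H.mul p q V) *
              (H.comul a A1 A2 * (H.comul b B1 B2 * (f A1 B1 U * H.mul U V r))) := by ring
          _ = _ := by
              simp only [Finset.sum_mul]
              refine Finset.sum_congr rfl fun x1 _ => Finset.sum_congr rfl fun x2 _ =>
                Finset.sum_congr rfl fun y1 _ => Finset.sum_congr rfl fun y2 _ =>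
                Finset.sum_congr rfl fun p _ => Finset.sum_congr rfl fun q _ => by ring
    _ = ∑ A1, ∑ B1, ∑ U, ∑ x1, ∑ x2, ∑ y1, ∑ y2, ∑ p, ∑ q, ∑ A2, ∑ B2, ∑ V,
          (H.comul a A1 A2 * H.comul A2 x1 x2) * ((H.comul b B1 B2 * H.comul B2 y1 y2) *
            ((H.mul p q V * H.mul U V r) * (f A1 B1 U * (g x1 y1 p * h x2 y2 q)))) := by
        conv_lhs => enter [2, A1]; rw [sum_push10]
        conv_lhs => enter [2, A1, 2, B1]; rw [sum_push9]
        conv_lhs => enter [2, A1, 2, B1, 2, U]; rw [sum_push8]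
    _ = _ := by
        refine Finset.sum_congr rfl fun A1 _ => Finset.sum_congr rfl fun B1 _ =>
          Finset.sum_congr rfl fun U _ => Finset.sum_congr rfl fun x1 _ =>
          Finset.sum_congr rfl fun x2 _ => Finset.sum_congr rfl fun y1 _ =>
          Finset.sum_congr rfl fun y2 _ => Finset.sum_congr rfl fun p _ =>
          Finset.sum_congr rfl fun q _ => ?_
        simp only [← Finset.mul_sum]
        simp only [← Finset.sum_mul]
        rw [← H.comul3_def, ← H.comul3_def, H.mul3_eq']

lemma conv2_assoc (f g h : ι → ι → ι → k) :
    H.conv2 (H.conv2 f g) h = H.conv2 f (H.conv2 g h) := by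
  funext a b r
  rw [H.conv2_conv2_left, H.conv2_conv2_right]
  conv_lhs => enter [2, A2, 2, B2, 2, V]; rw [sum_push5]
  conv_lhs => enter [2, A2, 2, B2, 2, V, 2, x2]; rw [sum_push4]
  conv_lhs => enter [2, A2, 2, B2, 2, V, 2, x2, 2, y2]; rw [sum_push3]
  conv_lhs => enter [2, A2, 2, B2, 2, V]; rw [sum_push5]
  conv_lhs => rw [sum_push8]
  conv_lhs => enter [2, B2, 2, V]; rw [sum_push6]
  conv_lhs => rw [sum_push8]
  conv_lhs => enter [2, V]; rw [sum_push7]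
  conv_lhs => rw [sum_push8]

end FinHopfSC
namespace FinHopfSC
variable {k : Type*} [Field k] {ι : Type*} [Fintype ι] [DecidableEq ι]
variable (H : FinHopfSC k ι)

set_option linter.unusedSectionVars false

/-- `(a,b,r) ↦` coefficient of `S(ab)` -/
def Ff : ι → ι → ι → k := fun a b r => ∑ s, H.mul a b s * H.S s r
/-- `(a,b,r) ↦` coefficient of `S(b)S(a)` -/
def Gg : ι → ι → ι → k := fun a b r => ∑ u, ∑ v, H.S b u * H.S a v * H.mul u v r
/-- the unit of the convolution algebra `Hom(A ⊗ A, A)` -/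
def Ee : ι → ι → ι → k := fun a b r => H.counit a * H.counit b * H.one r

lemma conv2_Ee_right (f : ι → ι → ι → k) : H.conv2 f H.Ee = f := by
  funext a b r
  simp only [conv2, Ee]
  conv_lhs => enter [2, a1]; rw [sum_push4]
  conv_lhs => enter [2, a1, 2, b1]; rw [sum_push3]
  conv_lhs => enter [2, a1, 2, b1, 2, u]; rw [sum_push2]
  calc (∑ a1, ∑ b1, ∑ u, ∑ a2, ∑ b2, ∑ v,
          H.comul a a1 a2 * H.comul b b1 b2 * f a1 b1 u *
            (H.counit a2 * H.counit b2 * H.one v) * H.mul u v r)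
      = ∑ a1, ∑ b1, ∑ u, (∑ a2, H.comul a a1 a2 * H.counit a2) *
          ((∑ b2, H.comul b b1 b2 * H.counit b2) *
            ((∑ v, H.one v * H.mul u v r) * f a1 b1 u)) := by
        refine Finset.sum_congr rfl fun a1 _ => Finset.sum_congr rfl fun b1 _ =>
          Finset.sum_congr rfl fun u _ => ?_
        calc (∑ a2, ∑ b2, ∑ v, H.comul a a1 a2 * H.comul b b1 b2 * f a1 b1 u *
                (H.counit a2 * H.counit b2 * H.one v) * H.mul u v r)
            = ∑ a2, ∑ b2, ∑ v, (H.comul a a1 a2 * H.counit a2) *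
                ((H.comul b b1 b2 * H.counit b2) * ((H.one v * H.mul u v r) * f a1 b1 u)) := by
              refine Finset.sum_congr rfl fun a2 _ => Finset.sum_congr rfl fun b2 _ =>
                Finset.sum_congr rfl fun v _ => by ring
          _ = _ := by
              simp only [← Finset.mul_sum]
              simp only [← Finset.sum_mul]
    _ = ∑ a1, ∑ b1, ∑ u, (if a = a1 then (1:k) else 0) *
          ((if b = b1 then (1:k) else 0) * ((if u = r then (1:k) else 0) * f a1 b1 u)) := by
        simp only [H.comul_counit, H.mul_one]
    _ = f a b r := by
        simp [ite_mul, zero_mul, one_mul, Finset.sum_ite_eq, Finset.sum_ite_eq']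

lemma conv2_Ee_left (g : ι → ι → ι → k) : H.conv2 H.Ee g = g := by
  funext a b r
  simp only [conv2, Ee]
  conv_lhs => rw [sum_push5]
  conv_lhs => enter [2, a2]; rw [sum_push4]
  conv_lhs => enter [2, a2, 2, b2]; rw [sum_push3]
  calc (∑ a2, ∑ b2, ∑ v, ∑ a1, ∑ b1, ∑ u,
          H.comul a a1 a2 * H.comul b b1 b2 * (H.counit a1 * H.counit b1 * H.one u) *
            g a2 b2 v * H.mul u v r)
      = ∑ a2, ∑ b2, ∑ v, (∑ a1, H.comul a a1 a2 * H.counit a1) *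
          ((∑ b1, H.comul b b1 b2 * H.counit b1) *
            ((∑ u, H.one u * H.mul u v r) * g a2 b2 v)) := by
        refine Finset.sum_congr rfl fun a2 _ => Finset.sum_congr rfl fun b2 _ =>
          Finset.sum_congr rfl fun v _ => ?_
        calc (∑ a1, ∑ b1, ∑ u, H.comul a a1 a2 * H.comul b b1 b2 *
                (H.counit a1 * H.counit b1 * H.one u) * g a2 b2 v * H.mul u v r)
            = ∑ a1, ∑ b1, ∑ u, (H.comul a a1 a2 * H.counit a1) *
                ((H.comul b b1 b2 * H.counit b1) * ((H.one u * H.mul u v r) * g a2 b2 v)) := by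
              refine Finset.sum_congr rfl fun a1 _ => Finset.sum_congr rfl fun b1 _ =>
                Finset.sum_congr rfl fun u _ => by ring
          _ = _ := by
              simp only [← Finset.mul_sum]
              simp only [← Finset.sum_mul]
    _ = ∑ a2, ∑ b2, ∑ v, (if a = a2 then (1:k) else 0) *
          ((if b = b2 then (1:k) else 0) * ((if v = r then (1:k) else 0) * g a2 b2 v)) := by
        simp only [H.counit_comul, H.one_mul]
    _ = g a b r := by
        simp [ite_mul, zero_mul, one_mul, Finset.sum_ite_eq, Finset.sum_ite_eq']

lemma conv2_Ff_mul : H.conv2 H.Ff H.mul = H.Ee := by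
  funext a b r
  simp only [conv2, Ff, Ee]
  calc (∑ a1, ∑ a2, ∑ b1, ∑ b2, ∑ u, ∑ v,
          H.comul a a1 a2 * H.comul b b1 b2 * (∑ s, H.mul a1 b1 s * H.S s u) *
            H.mul a2 b2 v * H.mul u v r)
      = ∑ a1, ∑ a2, ∑ b1, ∑ b2, ∑ u, ∑ v, ∑ s,
          (H.comul a a1 a2 * H.comul b b1 b2 * H.mul a1 b1 s * H.mul a2 b2 v) *
            (H.S s u * H.mul u v r) := by
        refine Finset.sum_congr rfl fun a1 _ => Finset.sum_congr rfl fun a2 _ =>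
          Finset.sum_congr rfl fun b1 _ => Finset.sum_congr rfl fun b2 _ =>
          Finset.sum_congr rfl fun u _ => Finset.sum_congr rfl fun v _ => ?_
        calc H.comul a a1 a2 * H.comul b b1 b2 * (∑ s, H.mul a1 b1 s * H.S s u) *
              H.mul a2 b2 v * H.mul u v r
            = (∑ s, H.mul a1 b1 s * H.S s u) *
                (H.comul a a1 a2 * (H.comul b b1 b2 * (H.mul a2 b2 v * H.mul u v r))) := by
              ring
          _ = _ := by
              rw [Finset.sum_mul]
              exact Finset.sum_congr rfl fun s _ => by ring
    _ = ∑ u, ∑ v, ∑ s, ∑ a1, ∑ a2, ∑ b1, ∑ b2,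
          (H.comul a a1 a2 * H.comul b b1 b2 * H.mul a1 b1 s * H.mul a2 b2 v) *
            (H.S s u * H.mul u v r) := by
        rw [sum_push6, sum_push6, sum_push6, sum_push6]
    _ = ∑ u, ∑ v, ∑ s, (∑ ρ, H.mul a b ρ * H.comul ρ s v) * (H.S s u * H.mul u v r) := by
        refine Finset.sum_congr rfl fun u _ => Finset.sum_congr rfl fun v _ =>
          Finset.sum_congr rfl fun s _ => ?_
        simp only [← Finset.sum_mul]
        rw [← H.comul_mul]
    _ = ∑ u, ∑ v, ∑ s, ∑ ρ, H.mul a b ρ * (H.comul ρ s v * H.S s u * H.mul u v r) := by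
        refine Finset.sum_congr rfl fun u _ => Finset.sum_congr rfl fun v _ =>
          Finset.sum_congr rfl fun s _ => ?_
        rw [Finset.sum_mul]
        exact Finset.sum_congr rfl fun ρ _ => by ring
    _ = ∑ ρ, ∑ s, ∑ v, ∑ u, H.mul a b ρ * (H.comul ρ s v * H.S s u * H.mul u v r) := by
        conv_lhs => enter [2, u, 2, v]; rw [sum_push1]
        conv_lhs => enter [2, u]; rw [sum_push2]
        conv_lhs => rw [sum_push3]
    _ = ∑ ρ, H.mul a b ρ * (H.counit ρ * H.one r) := by
        refine Finset.sum_congr rfl fun ρ _ => ?_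
        simp only [← Finset.mul_sum]
        rw [H.antipode_left]
    _ = (∑ ρ, H.mul a b ρ * H.counit ρ) * H.one r := by
        rw [Finset.sum_mul]
        exact Finset.sum_congr rfl fun ρ _ => by ring
    _ = H.counit a * H.counit b * H.one r := by rw [H.counit_mul]

lemma conv2_mul_Gg : H.conv2 H.mul H.Gg = H.Ee := by
  funext a b r
  simp only [conv2, Gg, Ee]
  calc (∑ a1, ∑ a2, ∑ b1, ∑ b2, ∑ u, ∑ v,
          H.comul a a1 a2 * H.comul b b1 b2 * H.mul a1 b1 u *
            (∑ x, ∑ y, H.S b2 x * H.S a2 y * H.mul x y v) * H.mul u v r)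
      = ∑ a1, ∑ a2, ∑ b1, ∑ b2, ∑ u, ∑ v, ∑ x, ∑ y,
          (H.comul a a1 a2 * H.comul b b1 b2 * (H.S b2 x * H.S a2 y) * H.mul a1 b1 u) *
            (H.mul x y v * H.mul u v r) := by
        refine Finset.sum_congr rfl fun a1 _ => Finset.sum_congr rfl fun a2 _ =>
          Finset.sum_congr rfl fun b1 _ => Finset.sum_congr rfl fun b2 _ =>
          Finset.sum_congr rfl fun u _ => Finset.sum_congr rfl fun v _ => ?_
        calc H.comul a a1 a2 * H.comul b b1 b2 * H.mul a1 b1 u *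
              (∑ x, ∑ y, H.S b2 x * H.S a2 y * H.mul x y v) * H.mul u v r
            = (∑ x, ∑ y, H.S b2 x * H.S a2 y * H.mul x y v) *
                (H.comul a a1 a2 * (H.comul b b1 b2 * (H.mul a1 b1 u * H.mul u v r))) := by
              ring
          _ = _ := by
              simp only [Finset.sum_mul]
              exact Finset.sum_congr rfl fun x _ => Finset.sum_congr rfl fun y _ => by ring
    _ = ∑ a1, ∑ a2, ∑ b1, ∑ b2, ∑ u, ∑ x, ∑ y, ∑ v,
          (H.comul a a1 a2 * H.comul b b1 b2 * (H.S b2 x * H.S a2 y) * H.mul a1 b1 u) *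
            (H.mul x y v * H.mul u v r) := by
        conv_lhs => enter [2, a1, 2, a2, 2, b1, 2, b2, 2, u]; rw [sum_push2]
    _ = ∑ a1, ∑ a2, ∑ b1, ∑ b2, ∑ u, ∑ x, ∑ y,
          (H.comul a a1 a2 * H.comul b b1 b2 * (H.S b2 x * H.S a2 y) * H.mul a1 b1 u) *
            (∑ v, H.mul u x v * H.mul v y r) := by
        refine Finset.sum_congr rfl fun a1 _ => Finset.sum_congr rfl fun a2 _ =>
          Finset.sum_congr rfl fun b1 _ => Finset.sum_congr rfl fun b2 _ =>
          Finset.sum_congr rfl fun u _ => Finset.sum_congr rfl fun x _ =>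
          Finset.sum_congr rfl fun y _ => ?_
        rw [← Finset.mul_sum, ← H.assoc]
    _ = ∑ a1, ∑ a2, ∑ b1, ∑ b2, ∑ x, ∑ y, ∑ v, ∑ u,
          (H.comul a a1 a2 * H.comul b b1 b2 * (H.S b2 x * H.S a2 y) * H.mul v y r) *
            (H.mul a1 b1 u * H.mul u x v) := by
        calc (∑ a1, ∑ a2, ∑ b1, ∑ b2, ∑ u, ∑ x, ∑ y,
                (H.comul a a1 a2 * H.comul b b1 b2 * (H.S b2 x * H.S a2 y) * H.mul a1 b1 u) *
                  (∑ v, H.mul u x v * H.mul v y r))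
            = ∑ a1, ∑ a2, ∑ b1, ∑ b2, ∑ u, ∑ x, ∑ y, ∑ v,
                (H.comul a a1 a2 * H.comul b b1 b2 * (H.S b2 x * H.S a2 y) * H.mul v y r) *
                  (H.mul a1 b1 u * H.mul u x v) := by
              refine Finset.sum_congr rfl fun a1 _ => Finset.sum_congr rfl fun a2 _ =>
                Finset.sum_congr rfl fun b1 _ => Finset.sum_congr rfl fun b2 _ =>
                Finset.sum_congr rfl fun u _ => Finset.sum_congr rfl fun x _ =>
                Finset.sum_congr rfl fun y _ => ?_
              rw [Finset.mul_sum]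
              exact Finset.sum_congr rfl fun v _ => by ring
          _ = _ := by
              conv_lhs => enter [2, a1, 2, a2, 2, b1, 2, b2]; rw [sum_push3]
    _ = ∑ a1, ∑ a2, ∑ b1, ∑ b2, ∑ x, ∑ y, ∑ v,
          (H.comul a a1 a2 * H.comul b b1 b2 * (H.S b2 x * H.S a2 y) * H.mul v y r) *
            (∑ u, H.mul b1 x u * H.mul a1 u v) := by
        refine Finset.sum_congr rfl fun a1 _ => Finset.sum_congr rfl fun a2 _ =>
          Finset.sum_congr rfl fun b1 _ => Finset.sum_congr rfl fun b2 _ =>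
          Finset.sum_congr rfl fun x _ => Finset.sum_congr rfl fun y _ =>
          Finset.sum_congr rfl fun v _ => ?_
        rw [← Finset.mul_sum, H.assoc]
    _ = ∑ a1, ∑ a2, ∑ y, ∑ v, ∑ u, ∑ b1, ∑ b2, ∑ x,
          (H.comul a a1 a2 * H.S a2 y * (H.mul a1 u v * H.mul v y r)) *
            (H.comul b b1 b2 * H.S b2 x * H.mul b1 x u) := by
        calc (∑ a1, ∑ a2, ∑ b1, ∑ b2, ∑ x, ∑ y, ∑ v,
                (H.comul a a1 a2 * H.comul b b1 b2 * (H.S b2 x * H.S a2 y) * H.mul v y r) *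
                  (∑ u, H.mul b1 x u * H.mul a1 u v))
            = ∑ a1, ∑ a2, ∑ b1, ∑ b2, ∑ x, ∑ y, ∑ v, ∑ u,
                (H.comul a a1 a2 * H.S a2 y * (H.mul a1 u v * H.mul v y r)) *
                  (H.comul b b1 b2 * H.S b2 x * H.mul b1 x u) := by
              refine Finset.sum_congr rfl fun a1 _ => Finset.sum_congr rfl fun a2 _ =>
                Finset.sum_congr rfl fun b1 _ => Finset.sum_congr rfl fun b2 _ =>
                Finset.sum_congr rfl fun x _ => Finset.sum_congr rfl fun y _ =>
                Finset.sum_congr rfl fun v _ => ?_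
              rw [Finset.mul_sum]
              exact Finset.sum_congr rfl fun u _ => by ring
          _ = _ := by
              conv_lhs => enter [2, a1, 2, a2]; rw [sum_push5]
              conv_lhs => enter [2, a1, 2, a2]; rw [sum_push5]
              conv_lhs => enter [2, a1, 2, a2]; rw [sum_push5]
    _ = ∑ a1, ∑ a2, ∑ y, ∑ v, ∑ u,
          (H.comul a a1 a2 * H.S a2 y * (H.mul a1 u v * H.mul v y r)) *
            (H.counit b * H.one u) := by
        refine Finset.sum_congr rfl fun a1 _ => Finset.sum_congr rfl fun a2 _ =>
          Finset.sum_congr rfl fun y _ => Finset.sum_congr rfl fun v _ =>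
          Finset.sum_congr rfl fun u _ => ?_
        simp only [← Finset.mul_sum]
        rw [H.antipode_right]
    _ = ∑ a1, ∑ a2, ∑ y, ∑ v,
          (H.comul a a1 a2 * H.S a2 y * H.mul v y r * H.counit b) *
            (if a1 = v then (1:k) else 0) := by
        refine Finset.sum_congr rfl fun a1 _ => Finset.sum_congr rfl fun a2 _ =>
          Finset.sum_congr rfl fun y _ => Finset.sum_congr rfl fun v _ => ?_
        calc (∑ u, (H.comul a a1 a2 * H.S a2 y * (H.mul a1 u v * H.mul v y r)) *
                (H.counit b * H.one u))
            = (H.comul a a1 a2 * H.S a2 y * H.mul v y r * H.counit b) *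
                (∑ u, H.one u * H.mul a1 u v) := by
              rw [Finset.mul_sum]
              exact Finset.sum_congr rfl fun u _ => by ring
          _ = _ := by rw [H.mul_one]
    _ = ∑ a1, ∑ a2, ∑ y,
          H.counit b * (H.comul a a1 a2 * H.S a2 y * H.mul a1 y r) := by
        refine Finset.sum_congr rfl fun a1 _ => Finset.sum_congr rfl fun a2 _ =>
          Finset.sum_congr rfl fun y _ => ?_
        simp [mul_ite, mul_one, mul_zero, Finset.sum_ite_eq, Finset.sum_ite_eq']
        ring
    _ = H.counit a * H.counit b * H.one r := by
        simp only [← Finset.mul_sum]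
        rw [H.antipode_right]
        ring

lemma anti_mult : H.Ff = H.Gg := by
  calc H.Ff = H.conv2 H.Ff H.Ee := (H.conv2_Ee_right H.Ff).symm
    _ = H.conv2 H.Ff (H.conv2 H.mul H.Gg) := by rw [H.conv2_mul_Gg]
    _ = H.conv2 (H.conv2 H.Ff H.mul) H.Gg := (H.conv2_assoc _ _ _).symm
    _ = H.conv2 H.Ee H.Gg := by rw [H.conv2_Ff_mul]
    _ = H.Gg := H.conv2_Ee_left H.Gg

end FinHopfSC
namespace FinHopfSC
variable {k : Type*} [Field k] {ι : Type*} [Fintype ι] [DecidableEq ι]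
variable (H : FinHopfSC k ι)

set_option linter.unusedSectionVars false

lemma anti_mult' (a b r : ι) :
    (∑ s, H.mul a b s * H.S s r) = ∑ u, ∑ v, H.S b u * H.S a v * H.mul u v r := by
  have := H.anti_mult
  have h := congrFun (congrFun (congrFun this a) b) r
  simpa [Ff, Gg] using h

lemma S_one (t : ι) : (∑ s, H.one s * H.S s t) = H.one t := by
  have key : (∑ ρ, H.one ρ * (H.counit ρ * H.one t)) = ∑ s, H.one s * H.S s t := by
    calc (∑ ρ, H.one ρ * (H.counit ρ * H.one t))
        = ∑ ρ, H.one ρ * (∑ a, ∑ b, ∑ s, H.comul ρ a b * H.S a s * H.mul s b t) := by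
          refine Finset.sum_congr rfl fun ρ _ => ?_
          rw [H.antipode_left]
      _ = ∑ a, ∑ b, ∑ s, ∑ ρ, (H.one ρ * H.comul ρ a b) * (H.S a s * H.mul s b t) := by
          calc (∑ ρ, H.one ρ * (∑ a, ∑ b, ∑ s, H.comul ρ a b * H.S a s * H.mul s b t))
              = ∑ ρ, ∑ a, ∑ b, ∑ s, (H.one ρ * H.comul ρ a b) * (H.S a s * H.mul s b t) := by
                refine Finset.sum_congr rfl fun ρ _ => ?_
                simp only [Finset.mul_sum]
                refine Finset.sum_congr rfl fun a _ => Finset.sum_congr rfl fun b _ =>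
                  Finset.sum_congr rfl fun s _ => by ring
            _ = _ := sum_push3 _
      _ = ∑ a, ∑ b, ∑ s, (H.one a * H.one b) * (H.S a s * H.mul s b t) := by
          refine Finset.sum_congr rfl fun a _ => Finset.sum_congr rfl fun b _ =>
            Finset.sum_congr rfl fun s _ => ?_
          rw [← Finset.sum_mul, H.comul_one]
      _ = ∑ a, ∑ s, (H.one a * H.S a s) * (∑ b, H.one b * H.mul s b t) := by
          conv_lhs => enter [2, a]; rw [sum_push1]
          refine Finset.sum_congr rfl fun a _ => Finset.sum_congr rfl fun s _ => ?_
          rw [Finset.mul_sum]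
          exact Finset.sum_congr rfl fun b _ => by ring
      _ = ∑ a, ∑ s, (H.one a * H.S a s) * (if s = t then (1:k) else 0) := by
          simp only [H.mul_one]
      _ = ∑ s, H.one s * H.S s t := by
          simp [mul_ite, mul_one, mul_zero, Finset.sum_ite_eq']
  rw [← key]
  calc (∑ ρ, H.one ρ * (H.counit ρ * H.one t))
      = (∑ ρ, H.one ρ * H.counit ρ) * H.one t := by
        rw [Finset.sum_mul]
        exact Finset.sum_congr rfl fun ρ _ => by ring
    _ = H.one t := by rw [H.counit_one, _root_.one_mul]

lemma Sinv_one (t : ι) : (∑ s, H.one s * H.Sinv s t) = H.one t := by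
  calc (∑ s, H.one s * H.Sinv s t)
      = ∑ s, (∑ w, H.one w * H.S w s) * H.Sinv s t := by
        refine Finset.sum_congr rfl fun s _ => ?_
        rw [H.S_one]
    _ = ∑ w, H.one w * (∑ s, H.S w s * H.Sinv s t) := by
        calc (∑ s, (∑ w, H.one w * H.S w s) * H.Sinv s t)
            = ∑ s, ∑ w, H.one w * (H.S w s * H.Sinv s t) := by
              refine Finset.sum_congr rfl fun s _ => ?_
              rw [Finset.sum_mul]
              exact Finset.sum_congr rfl fun w _ => by ring
          _ = ∑ w, ∑ s, H.one w * (H.S w s * H.Sinv s t) := Finset.sum_comm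
          _ = _ := by
              refine Finset.sum_congr rfl fun w _ => ?_
              rw [Finset.mul_sum]
    _ = ∑ w, H.one w * (if w = t then (1:k) else 0) := by simp only [H.S_Sinv]
    _ = H.one t := by simp [mul_ite, mul_one, mul_zero, Finset.sum_ite_eq']

lemma eq_of_mulS (L R : ι → k)
    (h : ∀ w, (∑ s, L s * H.S s w) = ∑ s, R s * H.S s w) (t : ι) : L t = R t := by
  have expand : ∀ F : ι → k, (∑ w, (∑ s, F s * H.S s w) * H.Sinv w t) = F t := by
    intro F
    calc (∑ w, (∑ s, F s * H.S s w) * H.Sinv w t)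
        = ∑ w, ∑ s, F s * (H.S s w * H.Sinv w t) := by
          refine Finset.sum_congr rfl fun w _ => ?_
          rw [Finset.sum_mul]
          exact Finset.sum_congr rfl fun s _ => by ring
      _ = ∑ s, F s * (∑ w, H.S s w * H.Sinv w t) := by
          rw [Finset.sum_comm]
          exact Finset.sum_congr rfl fun s _ => (Finset.mul_sum _ _ _).symm
      _ = ∑ s, F s * (if s = t then (1:k) else 0) := by simp only [H.S_Sinv]
      _ = F t := by simp [mul_ite, mul_one, mul_zero, Finset.sum_ite_eq']
  calc L t = ∑ w, (∑ s, L s * H.S s w) * H.Sinv w t := (expand L).symm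
    _ = ∑ w, (∑ s, R s * H.S s w) * H.Sinv w t := by
        refine Finset.sum_congr rfl fun w _ => ?_
        rw [h w]
    _ = R t := expand R

lemma cop (a t : ι) :
    (∑ p, ∑ q, ∑ x, H.comul a p q * H.Sinv p x * H.mul q x t)
      = H.counit a * H.one t := by
  refine H.eq_of_mulS (fun t' => ∑ p, ∑ q, ∑ x, H.comul a p q * H.Sinv p x * H.mul q x t')
    (fun t' => H.counit a * H.one t') ?_ t
  intro w
  have rhs : (∑ t', H.counit a * H.one t' * H.S t' w) = H.counit a * H.one w := by
    calc (∑ t', H.counit a * H.one t' * H.S t' w)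
        = H.counit a * ∑ t', H.one t' * H.S t' w := by
          rw [Finset.mul_sum]
          exact Finset.sum_congr rfl fun t' _ => by ring
      _ = H.counit a * H.one w := by rw [H.S_one]
  rw [rhs]
  calc (∑ t', (∑ p, ∑ q, ∑ x, H.comul a p q * H.Sinv p x * H.mul q x t') * H.S t' w)
      = ∑ p, ∑ q, ∑ x, ∑ t', (H.comul a p q * H.Sinv p x) * (H.mul q x t' * H.S t' w) := by
        calc (∑ t', (∑ p, ∑ q, ∑ x, H.comul a p q * H.Sinv p x * H.mul q x t') * H.S t' w)
            = ∑ t', ∑ p, ∑ q, ∑ x, (H.comul a p q * H.Sinv p x) * (H.mul q x t' * H.S t' w) := by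
              refine Finset.sum_congr rfl fun t' _ => ?_
              simp only [Finset.sum_mul]
              refine Finset.sum_congr rfl fun p _ => Finset.sum_congr rfl fun q _ =>
                Finset.sum_congr rfl fun x _ => by ring
          _ = _ := sum_push3 _
    _ = ∑ p, ∑ q, ∑ x, (H.comul a p q * H.Sinv p x) * (∑ u, ∑ v, H.S x u * H.S q v * H.mul u v w) := by
        refine Finset.sum_congr rfl fun p _ => Finset.sum_congr rfl fun q _ =>
          Finset.sum_congr rfl fun x _ => ?_
        rw [← Finset.mul_sum, H.anti_mult']
    _ = ∑ p, ∑ q, ∑ u, ∑ v, ∑ x, (H.comul a p q * (H.S q v * H.mul u v w)) *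
          (H.Sinv p x * H.S x u) := by
        calc (∑ p, ∑ q, ∑ x, (H.comul a p q * H.Sinv p x) *
                (∑ u, ∑ v, H.S x u * H.S q v * H.mul u v w))
            = ∑ p, ∑ q, ∑ x, ∑ u, ∑ v, (H.comul a p q * (H.S q v * H.mul u v w)) *
                (H.Sinv p x * H.S x u) := by
              refine Finset.sum_congr rfl fun p _ => Finset.sum_congr rfl fun q _ =>
                Finset.sum_congr rfl fun x _ => ?_
              simp only [Finset.mul_sum]
              refine Finset.sum_congr rfl fun u _ => Finset.sum_congr rfl fun v _ => by ring
          _ = _ := by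
              conv_lhs => enter [2, p, 2, q]; rw [sum_push2]
    _ = ∑ p, ∑ q, ∑ u, ∑ v, (H.comul a p q * (H.S q v * H.mul u v w)) *
          (if p = u then (1:k) else 0) := by
        refine Finset.sum_congr rfl fun p _ => Finset.sum_congr rfl fun q _ =>
          Finset.sum_congr rfl fun u _ => Finset.sum_congr rfl fun v _ => ?_
        rw [← Finset.mul_sum, H.Sinv_S]
    _ = ∑ p, ∑ q, ∑ v, H.comul a p q * H.S q v * H.mul p v w := by
        refine Finset.sum_congr rfl fun p _ => Finset.sum_congr rfl fun q _ => ?_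
        rw [Finset.sum_comm]
        simp [mul_ite, mul_one, mul_zero, Finset.sum_ite_eq]
        exact Finset.sum_congr rfl fun v _ => by ring
    _ = H.counit a * H.one w := H.antipode_right a w

end FinHopfSC
namespace FinHopfSC
variable {k : Type*} [Field k] {ι : Type*} [Fintype ι] [DecidableEq ι]
variable (H : FinHopfSC k ι)

set_option linter.unusedSectionVars false

lemma canon (y : ι → k) (r : ι) :
    (∑ t, H.mulX (e t) (H.hit (H.SAinv (e t)) y) r)
      = (∑ j, H.one j * y j) * H.counit r := by
  have hS : ∀ t s', H.SAinv (e t) s' = H.Sinv t s' := by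
    intro t s'
    simp [SAinv, e, ite_mul, one_mul, zero_mul, Finset.sum_ite_eq]
  have hmulX : ∀ t (z : ι → k), H.mulX (e t) z r = ∑ b, H.comul r t b * z b := by
    intro t z
    simp only [mulX, e, mul_ite, ite_mul, one_mul, zero_mul, mul_one, mul_zero,
      Finset.sum_ite_eq]
    simp
  calc (∑ t, H.mulX (e t) (H.hit (H.SAinv (e t)) y) r)
      = ∑ t, ∑ b, ∑ s', ∑ t', (H.comul r t b * H.Sinv t s' * H.mul b s' t') * y t' := by
        refine Finset.sum_congr rfl fun t _ => ?_
        rw [hmulX]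
        refine Finset.sum_congr rfl fun b _ => ?_
        simp only [hit, hS, Finset.mul_sum]
        refine Finset.sum_congr rfl fun s' _ => Finset.sum_congr rfl fun t' _ => by ring
    _ = ∑ t', ∑ t, ∑ b, ∑ s', (H.comul r t b * H.Sinv t s' * H.mul b s' t') * y t' := by
        conv_lhs => rw [sum_push3]
        conv_lhs => rw [sum_push3]
        conv_lhs => rw [sum_push3]
    _ = ∑ t', (∑ t, ∑ b, ∑ s', H.comul r t b * H.Sinv t s' * H.mul b s' t') * y t' := by
        refine Finset.sum_congr rfl fun t' _ => ?_
        simp only [← Finset.sum_mul]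
    _ = ∑ t', (H.counit r * H.one t') * y t' := by
        simp only [H.cop]
    _ = (∑ j, H.one j * y j) * H.counit r := by
        rw [Finset.sum_mul]
        exact Finset.sum_congr rfl fun j _ => by ring

/-- the rank-one endomorphism `y ↦ ⟨y, 1⟩ ε` of `A*`. -/
def kappaL : Module.End k (ι → k) where
  toFun := fun z => (∑ j, H.one j * z j) • H.counit
  map_add' z w := by
    simp only [Pi.add_apply, mul_add, Finset.sum_add_distrib, add_smul]
  map_smul' c z := by
    simp only [Pi.smul_apply, smul_eq_mul, RingHom.id_apply]
    rw [show (∑ j, H.one j * (c * z j)) = c * ∑ j, H.one j * z j by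
      rw [Finset.mul_sum]; exact Finset.sum_congr rfl fun j _ => by ring, mul_smul]

lemma kappaL_apply (z : ι → k) : H.kappaL z = (∑ j, H.one j * z j) • H.counit := rfl

lemma canonEnd : (∑ t, H.mulXL (e t) * H.hitL (H.SAinv (e t))) = H.kappaL := by
  refine LinearMap.ext fun y => funext fun r => ?_
  have h := H.canon y r
  simp only [LinearMap.sum_apply, Finset.sum_apply, Module.End.mul_apply, mulXL_apply,
    hitL_apply, kappaL_apply, Pi.smul_apply, smul_eq_mul]
  exact h

lemma e_expand (y : ι → k) : (∑ s, y s • e s) = y := by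
  funext j
  simp [e, Finset.sum_apply, Pi.smul_apply, smul_eq_mul, mul_ite, mul_one, mul_zero,
    Finset.sum_ite_eq']

lemma T1_sum2 (F : ι → ι → ι → ι → k) :
    H.T1 (fun u v => ∑ s, ∑ t, F s t u v) = ∑ s, ∑ t, H.T1 (fun u v => F s t u v) := by
  simp only [T1, Finset.sum_smul]
  conv_lhs => rw [sum_push3]
  conv_lhs => rw [sum_push3]

lemma T1_rank1 (f g : ι → k) : H.T1 (fun u v => f u * g v) = H.mulXL f * H.hitL g := by
  rw [H.mulXL_expand f, H.hitL_expand g, Finset.sum_mul_sum]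
  simp only [smul_mul_smul']
  rfl

lemma T1_Tinv (φ : Module.End k (ι → k)) :
    H.T1 (fun u v => ∑ s, ∑ t,
      (H.mulX (φ (e s)) (e t)) u * (H.mulA (H.SAinv (e t)) (e s)) v) = φ := by
  rw [H.T1_sum2 (fun s t u v => (H.mulX (φ (e s)) (e t)) u * (H.mulA (H.SAinv (e t)) (e s)) v)]
  calc (∑ s, ∑ t, H.T1 fun u v => H.mulX (φ (e s)) (e t) u * H.mulA (H.SAinv (e t)) (e s) v)
      = ∑ s, ∑ t, (H.mulXL (φ (e s)) * H.mulXL (e t)) *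
          (H.hitL (H.SAinv (e t)) * H.hitL (e s)) := by
        simp only [T1_rank1, mulXL_mul, hitL_mul]
    _ = ∑ s, (H.mulXL (φ (e s)) * (∑ t, H.mulXL (e t) * H.hitL (H.SAinv (e t)))) *
          H.hitL (e s) := by
        refine Finset.sum_congr rfl fun s _ => ?_
        rw [Finset.mul_sum, Finset.sum_mul]
        refine Finset.sum_congr rfl fun t _ => ?_
        simp only [mul_assoc]
    _ = ∑ s, (H.mulXL (φ (e s)) * H.kappaL) * H.hitL (e s) := by rw [H.canonEnd]
    _ = φ := by
        refine LinearMap.ext fun y => ?_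
        rw [LinearMap.sum_apply]
        have hterm : ∀ s, ((H.mulXL (φ (e s)) * H.kappaL) * H.hitL (e s)) y
            = y s • φ (e s) := by
          intro s
          calc ((H.mulXL (φ (e s)) * H.kappaL) * H.hitL (e s)) y
              = H.mulXL (φ (e s)) (H.kappaL (H.hitL (e s) y)) := rfl
            _ = H.mulXL (φ (e s)) ((y s) • H.counit) := by
                rw [kappaL_apply, hitL_apply, H.one_hit]
            _ = y s • H.mulX (φ (e s)) H.counit := by
                rw [map_smul]
                rfl
            _ = y s • φ (e s) := by rw [H.mulX_counit]
        simp only [hterm]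
        conv_rhs => rw [← e_expand y]
        rw [map_sum]
        simp only [map_smul]

lemma T1_bijective : Function.Bijective H.T1 := by
  let T : (ι → ι → k) →ₗ[k] Module.End k (ι → k) :=
    { toFun := H.T1, map_add' := H.T1_add, map_smul' := H.T1_smul }
  have hsurj : Function.Surjective T := fun φ => ⟨_, H.T1_Tinv φ⟩
  have hrank : Module.finrank k (ι → ι → k) = Module.finrank k (Module.End k (ι → k)) := by
    have h1 : Module.finrank k (ι → ι → k) = Fintype.card ι * Fintype.card ι := by
      rw [Module.finrank_pi_fintype]
      simp [Module.finrank_pi, Finset.sum_const, mul_comm]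
    have h2 : Module.finrank k (Module.End k (ι → k)) = Fintype.card ι * Fintype.card ι := by
      have h := Module.finrank_linearMap (R := k) (S := k) (M := ι → k) (N := ι → k)
      rw [Module.finrank_pi] at h
      exact h
    rw [h1, h2]
  have hinj : Function.Injective T :=
    (LinearMap.injective_iff_surjective_of_finrank_eq_finrank hrank).mpr hsurj
  exact ⟨hinj, hsurj⟩

end FinHopfSC


open FinHopfSC in
/-- the map `T₁ : A* # A → End_k(A*)`, `T₁(x # a)(y) = x (a ⇀ y)`,
is an algebra isomorphism from the Heisenberg double to `End_k(A*)`, whose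
inverse sends `φ` to `∑ s t, φ(x_s) x_t # S⁻¹(a_t) a_s`. -/
theorem stmt10 (k : Type*) [Field k] (ι : Type*) [Fintype ι] [DecidableEq ι]
    (H : FinHopfSC k ι) :
    (∀ c d : ι → ι → k, H.T1 (H.smashMul c d) = H.T1 c * H.T1 d) ∧
    H.T1 H.smashOne = 1 ∧
    (∀ c d : ι → ι → k, H.T1 (c + d) = H.T1 c + H.T1 d) ∧
    (∀ (r : k) (c : ι → ι → k), H.T1 (r • c) = r • H.T1 c) ∧
    Function.Bijective H.T1 ∧
    (∀ φ : Module.End k (ι → k),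
      H.T1 (fun u v => ∑ s, ∑ t,
        (H.mulX (φ (e s)) (e t)) u * (H.mulA (H.SAinv (e t)) (e s)) v) = φ) := by
  exact ⟨H.T1_mul, H.T1_one, H.T1_add, H.T1_smul, H.T1_bijective, H.T1_Tinv⟩
end
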